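/- The graph G = K_{s-2} ∨ complement(K_{t-1}) is the unique realization (up to isomorphism) of its degree sequence; moreover G contains no K_s, and the complement of G contains no subgraph isomorphic to any graph of order t without isolated vertices. -/

import Mathlib

open SimpleGraph
open scoped Classical

/-- Degree of a vertex. -/
noncomputable def deg {V : Type} (G : SimpleGraph V) (v : V) : ℕ := Nat.card (G.neighborSet v)

/-- Number of vertices of degree exactly 1 (leaves for trees/forests). -/
noncomputable def numLeaves {V : Type} (G : SimpleGraph V) : ℕ := Nat.card {v : V // deg G v = 1}

/-- Number of connected components containing at least one edge. -/
noncomputable def numEdgeComps {V : Type} (G : SimpleGraph V) : ℕ :=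
  Nat.card {c : G.ConnectedComponent // ∃ v w : V, G.Adj v w ∧ G.connectedComponentMk v = c}

/-- Maximum degree. -/
noncomputable def maxDeg {V : Type} (G : SimpleGraph V) : ℕ := sSup (Set.range (deg G))

/-- `G` and `H` pack: a bijection sends edges of `H` to non-edges of `G`. -/
def Packs {V W : Type} (G : SimpleGraph V) (H : SimpleGraph W) : Prop :=
  ∃ f : W ≃ V, ∀ x y : W, H.Adj x y → ¬ G.Adj (f x) (f y)

/-- `G` contains a copy of `H` as a subgraph. -/
def ContainsCopy {V W : Type} (G : SimpleGraph V) (H : SimpleGraph W) : Prop :=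
  ∃ f : W ↪ V, ∀ x y : W, H.Adj x y → G.Adj (f x) (f y)

/-- `G` realizes the degree sequence `π`. -/
def IsRealization {n : ℕ} (G : SimpleGraph (Fin n)) (π : Fin n → ℕ) : Prop :=
  ∀ i, deg G i = π i

/-- `π` is a graphic sequence. -/
def Graphic {n : ℕ} (π : Fin n → ℕ) : Prop :=
  ∃ G : SimpleGraph (Fin n), IsRealization G π

/-- `π` is potentially `H`-graphic. -/
def PotentiallyGraphic {n : ℕ} {W : Type} (π : Fin n → ℕ) (H : SimpleGraph W) : Prop :=
  ∃ G : SimpleGraph (Fin n), IsRealization G π ∧ ContainsCopy G H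

/-- The complementary sequence `π̄ = (n-1-d_n, …, n-1-d_1)`. -/
def compSeq {n : ℕ} (π : Fin n → ℕ) : Fin n → ℕ := fun i => n - 1 - π i.rev

/-- The potential-Ramsey number. -/
noncomputable def rpot {W₁ W₂ : Type} (H₁ : SimpleGraph W₁) (H₂ : SimpleGraph W₂) : ℕ :=
  sInf {N : ℕ | ∀ π : Fin N → ℕ, Antitone π → Graphic π →
    PotentiallyGraphic π H₁ ∨ PotentiallyGraphic (compSeq π) H₂}

/-- The star `K_{1,t-1}` on `t` vertices, centered at vertex `0`. -/
def starGraph (t : ℕ) : SimpleGraph (Fin t) := SimpleGraph.fromRel (fun i _ => (i : ℕ) = 0)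

/-- The join of K_{s-2} with an independent set of size t-1. -/
def cliquePlusIndep (s t : ℕ) : SimpleGraph (Fin (s - 2) ⊕ Fin (t - 1)) :=
  SimpleGraph.fromRel (fun a _ => a.isLeft)

/- ---------- auxiliary lemmas ---------- -/

lemma equiv_pred {V : Type} [Fintype V] (p q : V → Prop)
    (hn : Nat.card {v // p v} = Nat.card {v // q v}) :
    ∃ f : V ≃ V, ∀ v, q (f v) ↔ p v := by
  have h : Fintype.card {v // p v} = Fintype.card {v // q v} := by
    rwa [Nat.card_eq_fintype_card, Nat.card_eq_fintype_card] at hn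
  have h2 : Fintype.card {v // ¬ p v} = Fintype.card {v // ¬ q v} := by
    rw [Fintype.card_subtype_compl, Fintype.card_subtype_compl, h]
  obtain e1 := Fintype.equivOfCardEq h
  obtain e2 := Fintype.equivOfCardEq h2
  refine ⟨(Equiv.sumCompl p).symm.trans ((Equiv.sumCongr e1 e2).trans (Equiv.sumCompl q)), ?_⟩
  intro v
  by_cases hv : p v
  · simp only [Equiv.trans_apply, Equiv.sumCompl_symm_apply_of_pos hv]
    simp only [Equiv.sumCongr_apply, Sum.map_inl, Equiv.sumCompl_apply_inl]
    exact ⟨fun _ => hv, fun _ => (e1 ⟨v, hv⟩).2⟩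
  · simp only [Equiv.trans_apply, Equiv.sumCompl_symm_apply_of_neg hv]
    simp only [Equiv.sumCongr_apply, Sum.map_inr, Equiv.sumCompl_apply_inr]
    exact ⟨fun hq => absurd hq (e2 ⟨v, hv⟩).2, fun hp => absurd hp hv⟩

lemma deg_eq_degree {V : Type} [Fintype V] (G : SimpleGraph V) (v : V) :
    deg G v = G.degree v := by
  rw [deg, Nat.card_eq_fintype_card, SimpleGraph.card_neighborSet_eq_degree]

lemma adj_of_deg_max {V : Type} [Fintype V] (G : SimpleGraph V) (v : V)
    (h : deg G v = Fintype.card V - 1) : ∀ w, w ≠ v → G.Adj v w := by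
  intro w hw
  have hsub : G.neighborFinset v ⊆ Finset.univ.erase v := by
    intro x hx
    rw [SimpleGraph.mem_neighborFinset] at hx
    exact Finset.mem_erase.2 ⟨fun he => G.irrefl (he ▸ hx), Finset.mem_univ x⟩
  have hcard : (Finset.univ.erase v).card ≤ (G.neighborFinset v).card := by
    rw [SimpleGraph.card_neighborFinset_eq_degree, ← deg_eq_degree, h,
      Finset.card_erase_of_mem (Finset.mem_univ v), Finset.card_univ]
  have heq := Finset.eq_of_subset_of_card_le hsub hcard
  have : w ∈ G.neighborFinset v := by
    rw [heq]; exact Finset.mem_erase.2 ⟨hw, Finset.mem_univ w⟩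
  exact (SimpleGraph.mem_neighborFinset _ _ _).1 this

lemma cpi_adj (s t : ℕ) (x y : Fin (s-2) ⊕ Fin (t-1)) :
    (cliquePlusIndep s t).Adj x y ↔ x ≠ y ∧ (x.isLeft ∨ y.isLeft) := by
  simp [cliquePlusIndep, SimpleGraph.fromRel_adj]

lemma deg_inl (s t : ℕ) (i : Fin (s-2)) :
    deg (cliquePlusIndep s t) (Sum.inl i) = (s-2) + (t-1) - 1 := by
  have hset : (cliquePlusIndep s t).neighborSet (Sum.inl i) = {Sum.inl i}ᶜ := by
    ext y
    rw [Set.mem_compl_iff, Set.mem_singleton_iff, SimpleGraph.mem_neighborSet, cpi_adj]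
    constructor
    · rintro ⟨h, _⟩ rfl; exact h rfl
    · intro h; exact ⟨fun hh => h hh.symm, Or.inl rfl⟩
  rw [deg, hset, Nat.card_eq_fintype_card, Fintype.card_compl_set]
  simp

lemma deg_inr (s t : ℕ) (j : Fin (t-1)) :
    deg (cliquePlusIndep s t) (Sum.inr j) = s - 2 := by
  have hset : (cliquePlusIndep s t).neighborSet (Sum.inr j) = Set.range Sum.inl := by
    ext y
    cases y with
    | inl i => simp [SimpleGraph.mem_neighborSet, cpi_adj]
    | inr k => simp [SimpleGraph.mem_neighborSet, cpi_adj]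
  rw [deg, hset, Nat.card_range_of_injective Sum.inl_injective]
  simp

lemma nat_card_subtype {V : Type} [Fintype V] (p : V → Prop) :
    Nat.card {v // p v} = (Finset.univ.filter p).card := by
  rw [Nat.card_eq_fintype_card, Fintype.card_subtype]

lemma card_filter_eq_count {V : Type} [Fintype V] (f : V → ℕ) (D : ℕ) :
    (Finset.univ.filter fun v => f v = D).card
      = Multiset.count D (Multiset.map f Finset.univ.val) := by
  rw [Multiset.count_map]
  show Multiset.card ((Finset.univ.val).filter fun v => f v = D) = _
  congr 1
  exact Multiset.filter_congr (fun x _ => by constructor <;> (intro h; exact h.symm))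

set_option maxHeartbeats 1000000 in
lemma nat_card_eq_count {V : Type} [Fintype V] (f : V → ℕ) (D : ℕ) :
    Nat.card {v // f v = D} = Multiset.count D (Multiset.map f Finset.univ.val) := by
  rw [Nat.card_eq_fintype_card, Fintype.card_subtype, card_filter_eq_count]

/-- K_{s-2} ∨ (t-1)·K_1 is the unique realization of its degree sequence, contains no K_s,
and its complement contains no t-vertex graph without isolated vertices. -/
theorem cliquePlusIndep_properties (s t : ℕ) (hs : 2 ≤ s) (ht : 2 ≤ t) :
    (∀ G' : SimpleGraph (Fin (s - 2) ⊕ Fin (t - 1)),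
        Multiset.map (deg G') Finset.univ.val
          = Multiset.map (deg (cliquePlusIndep s t)) Finset.univ.val →
        Nonempty (G' ≃g cliquePlusIndep s t)) ∧
    ¬ ContainsCopy (cliquePlusIndep s t) (⊤ : SimpleGraph (Fin s)) ∧
    (∀ (W : Type) [Fintype W] (H : SimpleGraph W), Fintype.card W = t →
        (∀ v : W, 0 < deg H v) → ¬ ContainsCopy (cliquePlusIndep s t)ᶜ H) := by
  have hNV : Fintype.card (Fin (s - 2) ⊕ Fin (t - 1)) = (s - 2) + (t - 1) := by simp
  set G : SimpleGraph (Fin (s - 2) ⊕ Fin (t - 1)) := cliquePlusIndep s t with hG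
  set D : ℕ := (s - 2) + (t - 1) - 1 with hD
  have hDcard : D = Fintype.card (Fin (s - 2) ⊕ Fin (t - 1)) - 1 := by rw [hNV]
  have hq_inl : ∀ i : Fin (s-2), deg G (Sum.inl i) = D := fun i => deg_inl s t i
  have hq_inr : ∀ j : Fin (t-1), deg G (Sum.inr j) = s - 2 := fun j => deg_inr s t j
  -- if s-2 = D then t-1 = 1
  have hsmall : s - 2 = D → t - 1 = 1 := by intro h; rw [hD] at h; omega
  -- adjacency characterisation of G
  have hcharG : ∀ x y : Fin (s-2) ⊕ Fin (t-1),
      G.Adj x y ↔ x ≠ y ∧ (deg G x = D ∨ deg G y = D) := by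
    intro x y
    rw [hG, cpi_adj]
    constructor
    · rintro ⟨hxy, h | h⟩
      · obtain ⟨i, rfl⟩ := Sum.isLeft_iff.1 h
        exact ⟨hxy, Or.inl (hq_inl i)⟩
      · obtain ⟨i, rfl⟩ := Sum.isLeft_iff.1 h
        exact ⟨hxy, Or.inr (hq_inl i)⟩
    · rintro ⟨hxy, h⟩
      refine ⟨hxy, ?_⟩
      cases x with
      | inl i => exact Or.inl rfl
      | inr j =>
        cases y with
        | inl i => exact Or.inr rfl
        | inr k =>
          exfalso
          rcases h with h | h <;> rw [hq_inr] at h <;>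
          · have ht1 := hsmall h
            refine hxy ?_
            have : j = k := by
              apply Fin.ext
              have hj := j.isLt
              have hk := k.isLt
              omega
            rw [this]
  -- the count of vertices of degree D in G
  have hAG : (s - 2 = D → False) →
      (Finset.univ.filter fun v => deg G v = D).card = s - 2 := by
    intro hne
    have : (Finset.univ.filter fun v => deg G v = D)
        = Finset.univ.map ⟨Sum.inl, Sum.inl_injective⟩ := by
      ext v
      cases v with
      | inl i => simp [hq_inl i]
      | inr j =>
        simp only [Finset.mem_filter, Finset.mem_univ, true_and, hq_inr j, Finset.mem_map,
          Function.Embedding.coeFn_mk]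
        constructor
        · intro h
          exact absurd h hne
        · rintro ⟨i, h⟩
          cases h
    rw [this, Finset.card_map, Finset.card_univ, Fintype.card_fin]
  refine ⟨?_, ?_, ?_⟩
  · -- uniqueness of realization
    intro G' hmul
    -- every degree of G' is D or s-2
    have hC1 : ∀ v, deg G' v = D ∨ deg G' v = s - 2 := by
      intro v
      have hmem : deg G' v ∈ Multiset.map (deg G') Finset.univ.val :=
        Multiset.mem_map_of_mem _ (Finset.mem_univ_val v)
      rw [hmul] at hmem
      obtain ⟨u, _, hu⟩ := Multiset.mem_map.1 hmem
      cases u with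
      | inl i => left; rw [← hu]; exact hq_inl i
      | inr j => right; rw [← hu]; exact hq_inr j
    -- counts of degree-D vertices agree
    have hcount : (Finset.univ.filter fun v => deg G' v = D).card
        = (Finset.univ.filter fun v => deg G v = D).card := by
      rw [card_filter_eq_count, card_filter_eq_count, hmul]
    -- characterisation of adjacency in G'
    have hC2 : ∀ v, deg G' v = D → ∀ w, w ≠ v → G'.Adj v w := by
      intro v hv w hw
      exact adj_of_deg_max G' v (by rw [hv, hDcard]) w hw
    have hcharG' : ∀ x y, G'.Adj x y ↔ x ≠ y ∧ (deg G' x = D ∨ deg G' y = D) := by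
      intro x y
      constructor
      · intro hadj
        refine ⟨hadj.ne, ?_⟩
        by_contra hcon
        push_neg at hcon
        obtain ⟨hx, hy⟩ := hcon
        have hxv : deg G' x = s - 2 := (hC1 x).resolve_left hx
        have hyv : deg G' y = s - 2 := (hC1 y).resolve_left hy
        have hne : s - 2 = D → False := fun h => hx (hxv.trans h)
        -- the set of degree-D vertices
        set A : Finset (Fin (s-2) ⊕ Fin (t-1)) :=
          Finset.univ.filter fun v => deg G' v = D with hA
        have hAcard : A.card = s - 2 := by rw [hA, hcount, hAG hne]
        have hAsub : A ⊆ G'.neighborFinset x := by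
          intro w hw
          rw [hA, Finset.mem_filter] at hw
          have hwx : w ≠ x := by
            intro h
            exact hne (hxv.symm.trans (h ▸ hw.2))
          rw [SimpleGraph.mem_neighborFinset]
          exact (hC2 w hw.2 x (Ne.symm hwx)).symm
        have hNcard : (G'.neighborFinset x).card = s - 2 := by
          rw [SimpleGraph.card_neighborFinset_eq_degree, ← deg_eq_degree, hxv]
        have heq : A = G'.neighborFinset x :=
          Finset.eq_of_subset_of_card_le hAsub (by rw [hAcard, hNcard])
        have : y ∈ A := by
          rw [heq, SimpleGraph.mem_neighborFinset]; exact hadj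
        rw [hA, Finset.mem_filter] at this
        exact hy this.2
      · rintro ⟨hxy, h | h⟩
        · exact hC2 x h y (Ne.symm hxy)
        · exact (hC2 y h x hxy).symm
    -- build the isomorphism
    have hsub : Nat.card {v // deg G' v = D} = Nat.card {v // deg G v = D} := by
      rw [nat_card_eq_count, nat_card_eq_count, hmul]
    obtain ⟨f, hf⟩ := equiv_pred (fun v => deg G' v = D) (fun v => deg G v = D) hsub
    refine ⟨⟨f, ?_⟩⟩
    intro a b
    rw [hcharG, hcharG', hf, hf, f.apply_eq_iff_eq.ne]
  · -- no K_s
    rintro ⟨f, hf⟩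
    have hone : (1 : Fin 1) = 0 := rfl
    set g : Fin s → Fin (s - 2) ⊕ Fin 1 :=
      fun x => Sum.elim (fun i => Sum.inl i) (fun _ => Sum.inr 0) (f x) with hg
    have hginj : Function.Injective g := by
      intro a b hab
      rw [hg] at hab
      by_contra hne
      have hadj := hf a b (by simp [hne])
      rw [cpi_adj] at hadj
      cases ha : f a with
      | inl i =>
        cases hb : f b with
        | inl j =>
          simp only [ha, hb, Sum.elim_inl] at hab
          exact hne (f.injective (by rw [ha, hb]; exact congrArg _ (Sum.inl_injective hab)))
        | inr j => simp [ha, hb] at hab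
      | inr i =>
        cases hb : f b with
        | inl j => simp [ha, hb] at hab
        | inr j =>
          rcases hadj.2 with h | h
          · rw [ha] at h; simp at h
          · rw [hb] at h; simp at h
    have hle := Fintype.card_le_of_injective g hginj
    simp only [Fintype.card_fin, Fintype.card_sum, Fintype.card_fin] at hle
    omega
  · -- complement contains no graph of order t without isolated vertices
    intro W _ H hcardW hdegH
    rintro ⟨f, hf⟩
    have hrange : ∀ x : W, ∃ j : Fin (t-1), f x = Sum.inr j := by
      intro x
      have hpos := hdegH x
      rw [deg, Nat.card_pos_iff] at hpos
      obtain ⟨⟨y, hy⟩⟩ := hpos.1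
      have hadj := hf x y hy
      rw [SimpleGraph.compl_adj, cpi_adj] at hadj
      obtain ⟨hne, hnot⟩ := hadj
      push_neg at hnot
      have hnl := hnot hne
      cases hfx : f x with
      | inl i =>
        exfalso
        apply hnl.1
        rw [hfx]
        rfl
      | inr j => exact ⟨j, rfl⟩
    choose g hg using hrange
    have hginj : Function.Injective g := by
      intro a b hab
      apply f.injective
      rw [hg a, hg b, hab]
    have hle := Fintype.card_le_of_injective g hginj
    rw [hcardW, Fintype.card_fin] at hle
    omega
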